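/- Let p be a prime and let G and A be finite cyclic p-groups with |A| < |G|. Suppose E = ((G×G)/(Δ_K(G), φ_κ)) is the fibered biset idempotent associated to a pair (K, κ) with κ : K → A faithful. Then E cannot be written as a product X ⊗_{AH} Y where X is an A-fibered (G,H)-biset, Y is an A-fibered (H,G)-biset, and H is a group with |H| < |G|. Concretely: there do not exist a group H with |H| < |G|, pairs (U, φ) ∈ M_{G×H}(A) and (V, ψ) ∈ M_{H×G}(A) with the Mackey product of the corresponding transitive fibered bisets equal to E. -/

import Mathlib

/-- Reduction criterion (Theorem 3.2(ii), hard direction): let `p` be a prime and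
`G`, `A` finite cyclic `p`-groups with `|A| < |G|`.  If `κ : K → A` is faithful,
then the fibered-biset idempotent `E = ((G×G)/(Δ_K(G), φ_κ))` does not factor
through a group of smaller order: there are no group `H` with `|H| < |G|`, pairs
`(U, φ) ∈ M_{G×H}(A)` and `(V, ψ) ∈ M_{H×G}(A)` whose Mackey product is `E`,
i.e. with `U ∗ V = Δ_K(G) = {(g,g') : g g'⁻¹ ∈ K}` and `φ ∗ ψ = φ_κ` where
`φ_κ(g, g') = κ(g g'⁻¹)`. -/
theorem idempotent_reduced (p : ℕ) (hp : p.Prime) (G A : Type*) [Group G]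
    [Fintype G] [IsCyclic G] [CommGroup A] [Fintype A] [IsCyclic A]
    (hGp : IsPGroup p G) (hAp : IsPGroup p A)
    (hcard : Fintype.card A < Fintype.card G)
    (K : Subgroup G) (κ : ↥K →* A) (hκ : Function.Injective κ) :
    ¬ ∃ (H : GrpCat), Nat.card H < Nat.card G ∧ Finite H ∧
        ∃ (U : Subgroup (G × H)) (V : Subgroup (H × G))
          (φ : ↥U →* A) (ψ : ↥V →* A),
          (∀ g g' : G, (∃ h : H, (g, h) ∈ U ∧ (h, g') ∈ V) ↔ g * g'⁻¹ ∈ K) ∧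
          ∀ (g g' : G) (h : H) (hu : (g, h) ∈ U) (hv : (h, g') ∈ V),
            ∃ hk : g * g'⁻¹ ∈ K,
              φ ⟨(g, h), hu⟩ * ψ ⟨(h, g'), hv⟩ = κ ⟨g * g'⁻¹, hk⟩ := by
  rintro ⟨H, hHcard, hHfin, U, V, φ, ψ, hmack, hval⟩
  have : Fact p.Prime := ⟨hp⟩
  -- cardinalities
  obtain ⟨n, hn⟩ := IsPGroup.iff_card.mp hGp
  obtain ⟨a, ha⟩ := IsPGroup.iff_card.mp hAp
  have hp1 : 1 < p := hp.one_lt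
  have haltn : a < n := by
    have : p ^ a < p ^ n := by rw [← ha, ← hn, Nat.card_eq_fintype_card, Nat.card_eq_fintype_card]; exact hcard
    exact (pow_lt_pow_iff_right₀ hp1).mp this
  have hn1 : 1 ≤ n := Nat.one_le_of_lt haltn
  -- generator of G
  obtain ⟨g, hg⟩ := IsCyclic.exists_generator (α := G)
  have hordg : orderOf g = p ^ n := by
    rw [orderOf_eq_card_of_forall_mem_zpowers hg]; exact hn
  -- get h
  obtain ⟨h, hu, hv⟩ := (hmack g g).mpr (by simpa using K.one_mem)
  -- order of h
  set t := orderOf h with ht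
  have ht0 : t ≠ 0 := (orderOf_pos h).ne'
  have htdvd : t ∣ Nat.card H := orderOf_dvd_natCard h
  have hHpos : 0 < Nat.card H := Nat.card_pos
  set s := t.factorization p with hs
  have hps : p ^ s ∣ t := Nat.ordProj_dvd t p
  have hpst : p ^ s ≤ t := Nat.le_of_dvd (Nat.pos_of_ne_zero ht0) hps
  have htH : t ≤ Nat.card H := Nat.le_of_dvd hHpos htdvd
  have hsn : s < n := by
    have : p ^ s < p ^ n := by
      calc p ^ s ≤ t := hpst
        _ ≤ Nat.card H := htH
        _ < Nat.card G := hHcard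
        _ = p ^ n := hn
    exact (pow_lt_pow_iff_right₀ hp1).mp this
  -- the exponent N
  set u := t / p ^ s with hu'
  have htu : p ^ s * u = t := Nat.ordProj_mul_ordCompl_eq_self t p
  have hpu : ¬ p ∣ u := Nat.not_dvd_ordCompl hp ht0
  set N := p ^ (n - 1) * u with hN
  have htN : t ∣ N := by
    rw [hN, ← htu]
    exact Nat.mul_dvd_mul_right (pow_dvd_pow p (by omega)) u
  have hhN : h ^ N = 1 := orderOf_dvd_iff_pow_eq_one.mp htN
  -- membership of the power
  have huN : ((g ^ N, (1 : H)) : G × H) ∈ U := by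
    have := U.pow_mem hu N
    rwa [Prod.pow_mk, hhN] at this
  have hvN : (((1 : H), (1 : G)) : H × G) ∈ V := V.one_mem
  obtain ⟨hk, heq⟩ := hval (g ^ N) 1 1 huN hvN
  -- compute φ value
  have hsub : (⟨(g ^ N, (1 : H)), huN⟩ : U) = (⟨(g, h), hu⟩ : U) ^ N := by
    ext
    · simp
    · simp [hhN]
  have hφ : φ ⟨(g ^ N, (1 : H)), huN⟩ = (φ ⟨(g, h), hu⟩) ^ N := by
    rw [hsub, map_pow]
  have hψ : ψ ⟨((1 : H), (1 : G)), hvN⟩ = 1 := by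
    have : (⟨((1 : H), (1 : G)), hvN⟩ : V) = 1 := rfl
    rw [this, map_one]
  -- α ^ N = 1
  have hαN : (φ ⟨(g, h), hu⟩) ^ N = 1 := by
    have hcardA : (φ ⟨(g, h), hu⟩) ^ (p ^ a) = 1 := by
      rw [← ha]; exact pow_card_eq_one'
    have : p ^ a ∣ N := by
      rw [hN]
      exact Dvd.dvd.mul_right (pow_dvd_pow p (by omega)) u
    obtain ⟨c, hc⟩ := this
    rw [hc, pow_mul, hcardA, one_pow]
  -- conclude κ value is 1
  have hκ1 : κ ⟨g ^ N * (1 : G)⁻¹, hk⟩ = κ 1 := by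
    rw [← heq, hφ, hψ, hαN, one_mul, map_one]
  have : (⟨g ^ N * (1 : G)⁻¹, hk⟩ : K) = 1 := hκ hκ1
  have hgN : g ^ N = 1 := by
    have := Subtype.ext_iff.mp this
    simpa using this
  have hdvd : p ^ n ∣ N := by
    rw [← hordg]
    exact orderOf_dvd_of_pow_eq_one hgN
  -- contradiction
  have : p ∣ u := by
    have h1 : p ^ (n - 1) * p ∣ p ^ (n - 1) * u := by
      rw [← pow_succ]
      have : n - 1 + 1 = n := by omega
      rw [this]
      exact hdvd
    exact (Nat.mul_dvd_mul_iff_left (Nat.pow_pos hp.pos)).mp h1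
  exact hpu this
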